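/- Assume t ≥ 2 and that the t-th fundamental form of V at P satisfies dim_ℂ |I^t| = k − ℓ for an integer ℓ with 0 < ℓ ≤ k (i.e. |I^t| has projective dimension k − ℓ − 1). Let M := #{ I ∈ ℕ^k : |I| ≤ t−1 } and define Φ_{t−1} : U × ℂ^M → ℂ^{N+1} by Φ_{t−1}(u, λ) := ∑_{|I|≤t−1} λ_I x̂^I(u), a parametrization of the affine cone over the osculating variety Tan^{t−1}(V). Then for every λ ∈ ℂ^M the image of the derivative DΦ_{t−1}(u₀, λ) is contained in T^(t)(u₀), and rank DΦ_{t−1}(u₀, λ) ≤ d_{t−1} + (k − ℓ) + 1. In particular, since the expected dimension of Tan^{t−1}(V) is k + d_{t−1}, the variety V has (t−1)-th osculating defect at least ℓ. -/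

import Mathlib

/- Common setup: iterated partial derivatives, multi-indices, osculating spaces,
fundamental forms for a local parametrisation `x : ℂ^k → ℂ^N` of a variety
`V ⊂ ℙ^N`, lifted to `x̂ = (1, x) : ℂ^k → ℂ^{N+1}`. -/

open scoped BigOperators

noncomputable section

/-- Iterated partial derivative of `f` along a list of coordinate directions. -/
def pderivList {k : ℕ} {E : Type} [NormedAddCommGroup E] [NormedSpace ℂ E] :
    List (Fin k) → ((Fin k → ℂ) → E) → ((Fin k → ℂ) → E)
  | [], f => f
  | j :: L, f => fun u => fderiv ℂ (pderivList L f) u (Pi.single j 1)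

/-- The canonical list of coordinate directions attached to a multi-index `I : Fin k → ℕ`
(the direction `j` repeated `I j` times). -/
def idxList {k : ℕ} (I : Fin k → ℕ) : List (Fin k) :=
  (List.finRange k).flatMap fun j => List.replicate (I j) j

/-- The partial derivative `∂^I f = ∂^{|I|} f / ∂u₁^{i₁} ⋯ ∂u_k^{i_k}`. -/
def pd {k : ℕ} {E : Type} [NormedAddCommGroup E] [NormedSpace ℂ E]
    (I : Fin k → ℕ) (f : (Fin k → ℂ) → E) : (Fin k → ℂ) → E :=
  pderivList (idxList I) f

/-- The finset of multi-indices `I : Fin k → ℕ` of total degree `|I| ≤ r`. -/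
def degLE (k r : ℕ) : Finset (Fin k → ℕ) :=
  (Finset.Iic fun _ : Fin k => r).filter fun I => (∑ j, I j) ≤ r

/-- The finset of multi-indices `I : Fin k → ℕ` of total degree `|I| = r`. -/
def degEq (k r : ℕ) : Finset (Fin k → ℕ) :=
  (Finset.Iic fun _ : Fin k => r).filter fun I => (∑ j, I j) = r

/-- The lift `x̂(u) = (1, x(u))` of the parametrisation `x` to the affine cone `ℂ^{N+1}`. -/
def coneLift {k N : ℕ} (x : (Fin k → ℂ) → (Fin N → ℂ)) : (Fin k → ℂ) → (Fin (N + 1) → ℂ) :=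
  fun u => Fin.cons 1 (x u)

/-- `osc x̂ s u` is the affine cone `T^(s)(u)` over the `s`-th osculating space at the point of
parameter `u`: the span of all partial derivatives `x̂^I(u)` with `|I| ≤ s`. -/
def osc {k N : ℕ} (xhat : (Fin k → ℂ) → (Fin (N + 1) → ℂ)) (s : ℕ) (u : Fin k → ℂ) :
    Submodule ℂ (Fin (N + 1) → ℂ) :=
  Submodule.span ℂ {y | ∃ I : Fin k → ℕ, (∑ j, I j) ≤ s ∧ y = pd I xhat u}

/-- The degree-`r` form `F^r_ξ(v) = ξ(D^r x̂(u₀)(v,…,v))`, as a function of `v ∈ ℂ^k`. -/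
def formOf {k N : ℕ} (xhat : (Fin k → ℂ) → (Fin (N + 1) → ℂ)) (u₀ : Fin k → ℂ) (r : ℕ)
    (ξ : Module.Dual ℂ (Fin (N + 1) → ℂ)) : (Fin k → ℂ) → ℂ :=
  fun v => ξ (iteratedFDeriv ℂ r xhat u₀ fun _ => v)

/-- The `r`-th fundamental form `|I^r|` of `V` at `P`, as the set of the forms `F^r_ξ` for `ξ`
a linear functional vanishing on `T^(r-1)(u₀)`. -/
def fundSet {k N : ℕ} (xhat : (Fin k → ℂ) → (Fin (N + 1) → ℂ)) (u₀ : Fin k → ℂ) (r : ℕ) :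
    Set ((Fin k → ℂ) → ℂ) :=
  { F | ∃ ξ : Module.Dual ℂ (Fin (N + 1) → ℂ),
      (∀ y ∈ osc xhat (r - 1) u₀, ξ y = 0) ∧ F = formOf xhat u₀ r ξ }

/-- The `r`-th fundamental form `|I^r|` as a subspace of the space of functions of `v`. -/
def fundForm {k N : ℕ} (xhat : (Fin k → ℂ) → (Fin (N + 1) → ℂ)) (u₀ : Fin k → ℂ) (r : ℕ) :
    Submodule ℂ ((Fin k → ℂ) → ℂ) :=
  Submodule.span ℂ (fundSet xhat u₀ r)

/-- The linear map sending the coefficients `(E_I)_{|I|=t}` of a degree-`t` form to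
`∑_{|I|=t} E_I x̂^I(u₀) ∈ ℂ^{N+1}`; a form is the symbol of a Laplace equation of order `t`
iff its coefficients are mapped into `T^(t-1)(u₀)`. -/
def symbolMap {k N : ℕ} (xhat : (Fin k → ℂ) → (Fin (N + 1) → ℂ)) (u₀ : Fin k → ℂ) (t : ℕ) :
    ({I : Fin k → ℕ // I ∈ degEq k t} → ℂ) →ₗ[ℂ] (Fin (N + 1) → ℂ) where
  toFun E := ∑ I : {I : Fin k → ℕ // I ∈ degEq k t}, E I • pd I.1 xhat u₀
  map_add' a b := by simp [add_smul, Finset.sum_add_distrib]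
  map_smul' c a := by simp [smul_smul, Finset.smul_sum]

/-- The parametrisation `Φ_t(u, λ) = ∑_{|I| ≤ t} λ_I x̂^I(u)` of the affine cone over the
`t`-th osculating variety `Tan^t(V)`. -/
def tanPhi {k N : ℕ} (xhat : (Fin k → ℂ) → (Fin (N + 1) → ℂ)) (t : ℕ) :
    ((Fin k → ℂ) × ({I : Fin k → ℕ // I ∈ degLE k t} → ℂ)) → (Fin (N + 1) → ℂ) :=
  fun p => ∑ I : {I : Fin k → ℕ // I ∈ degLE k t}, p.2 I • pd I.1 xhat p.1

/-- The rank of the Jacobian matrix of a linear system `S` of degree-`r` forms: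
the maximum over `v ∈ ℂ^k` of the dimension of the span of the gradients at `v`
of the members of `S`. -/
def jacRank (k : ℕ) (S : Set ((Fin k → ℂ) → ℂ)) : ℕ :=
  sSup {r : ℕ | ∃ v : Fin k → ℂ,
    r = Module.finrank ℂ
      ↥(Submodule.span ℂ {g : Fin k → ℂ | ∃ F ∈ S, g = fun j => pd (Pi.single j 1) F v})}

/-- The coefficients of the reducible degree-`(t+1)` form
`(∑_j w_j v_j) · (∑_{|I| = t} λ_I v^I)`. -/
def prodSymb {k : ℕ} (t : ℕ) (w : Fin k → ℂ) (lam : {I : Fin k → ℕ // I ∈ degLE k t} → ℂ)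
    (J : Fin k → ℕ) : ℂ :=
  ∑ j : Fin k,
    if h : 1 ≤ J j ∧ (J - Pi.single j 1 : Fin k → ℕ) ∈ degLE k t ∧
        (∑ i, (J - Pi.single j 1 : Fin k → ℕ) i) = t
    then w j * lam ⟨(J - Pi.single j 1 : Fin k → ℕ), h.2.1⟩ else 0


section Helpers

variable {k : ℕ} {E : Type} [NormedAddCommGroup E] [NormedSpace ℂ E]
variable {U : Set (Fin k → ℂ)} {f : (Fin k → ℂ) → E}

theorem pderivList_contDiffOn (hU : IsOpen U) (hf : ContDiffOn ℂ (⊤ : ℕ∞) f U) :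
    ∀ L : List (Fin k), ContDiffOn ℂ (⊤ : ℕ∞) (pderivList L f) U := by
  intro L
  induction L with
  | nil => exact hf
  | cons j L ih =>
      show ContDiffOn ℂ (⊤ : ℕ∞) (fun u => fderiv ℂ (pderivList L f) u (Pi.single j 1)) U
      exact (ih.fderiv_of_isOpen hU (by exact_mod_cast le_top)).clm_apply contDiffOn_const

theorem pderivList_differentiableAt (hU : IsOpen U) (hf : ContDiffOn ℂ (⊤ : ℕ∞) f U)
    (L : List (Fin k)) {u : Fin k → ℂ} (hu : u ∈ U) :
    DifferentiableAt ℂ (pderivList L f) u :=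
  ((pderivList_contDiffOn hU hf L).contDiffAt (hU.mem_nhds hu)).differentiableAt (by simp)

theorem pderivList_swap (hU : IsOpen U) (hf : ContDiffOn ℂ (⊤ : ℕ∞) f U)
    (a b : Fin k) (L : List (Fin k)) {u : Fin k → ℂ} (hu : u ∈ U) :
    pderivList (a :: b :: L) f u = pderivList (b :: a :: L) f u := by
  set g := pderivList L f with hg
  have hgc : ContDiffOn ℂ (⊤ : ℕ∞) g U := pderivList_contDiffOn hU hf L
  have hgc' : ContDiffOn ℂ (⊤ : ℕ∞) (fderiv ℂ g) U :=
    hgc.fderiv_of_isOpen hU (by exact_mod_cast le_top)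
  have hdg : DifferentiableAt ℂ (fderiv ℂ g) u :=
    (hgc'.contDiffAt (hU.mem_nhds hu)).differentiableAt (by simp)
  have key : ∀ c d : Fin k, pderivList (c :: d :: L) f u
      = fderiv ℂ (fderiv ℂ g) u (Pi.single c 1) (Pi.single d 1) := by
    intro c d
    show fderiv ℂ (fun z => fderiv ℂ g z (Pi.single d 1)) u (Pi.single c 1) = _
    rw [fderiv_clm_apply hdg (differentiableAt_const _)]
    simp
  rw [key a b, key b a]
  have hsymm : IsSymmSndFDerivAt ℂ g u :=
    (hgc.contDiffAt (hU.mem_nhds hu)).isSymmSndFDerivAt (by rw [minSmoothness_of_isRCLikeNormedField]; exact (WithTop.coe_le_coe.2 (le_top : (2:ℕ∞) ≤ ⊤) : ((2:ℕ∞) : WithTop ℕ∞) ≤ ((⊤:ℕ∞) : WithTop ℕ∞)))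
  exact hsymm _ _

theorem pderivList_perm (hU : IsOpen U) (hf : ContDiffOn ℂ (⊤ : ℕ∞) f U)
    {L₁ L₂ : List (Fin k)} (hp : L₁.Perm L₂) :
    ∀ u ∈ U, pderivList L₁ f u = pderivList L₂ f u := by
  induction hp with
  | nil => intro u _; rfl
  | cons j _ ih =>
      intro u hu
      show fderiv ℂ (pderivList _ f) u (Pi.single j 1) = fderiv ℂ (pderivList _ f) u (Pi.single j 1)
      have : pderivList _ f =ᶠ[nhds u] pderivList _ f :=
        Filter.eventuallyEq_of_mem (hU.mem_nhds hu) (fun z hz => ih z hz)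
      rw [this.fderiv_eq]
  | swap a b L =>
      intro u hu; exact (pderivList_swap hU hf b a L hu)
  | trans h₁ h₂ ih₁ ih₂ =>
      intro u hu; exact (ih₁ u hu).trans (ih₂ u hu)

theorem count_idxList (I : Fin k → ℕ) (j : Fin k) : (idxList I).count j = I j := by
  unfold idxList
  rw [List.count_flatMap]
  have : ((List.finRange k).map fun i => (List.replicate (I i) i).count j).sum
      = ∑ i : Fin k, (List.replicate (I i) i).count j := by
    rw [Fin.sum_univ_def]
  rw [Function.comp_def] at *
  rw [this]
  simp [List.count_replicate]

theorem length_idxList (I : Fin k → ℕ) : (idxList I).length = ∑ j, I j := by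
  unfold idxList
  rw [List.length_flatMap, Fin.sum_univ_def]
  simp [Function.comp_def]

theorem perm_idxList {L : List (Fin k)} {I : Fin k → ℕ}
    (h : ∀ j, L.count j = I j) : L.Perm (idxList I) := by
  rw [List.perm_iff_count]
  intro a
  rw [h a, count_idxList]

theorem itF_list (hU : IsOpen U) (hf : ContDiffOn ℂ (⊤ : ℕ∞) f U) (L : List (Fin k)) :
    ∀ u ∈ U, iteratedFDeriv ℂ L.length f u (fun s => Pi.single (L.get s) 1)
      = pderivList L f u := by
  induction L with
  | nil => intro u _; simp [pderivList, iteratedFDeriv_zero_apply]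
  | cons j L ih =>
      intro u hu
      have hdiff : DifferentiableAt ℂ (iteratedFDeriv ℂ L.length f) u := by
        have h1 : DifferentiableOn ℂ (iteratedFDerivWithin ℂ L.length f U) U :=
          hf.differentiableOn_iteratedFDerivWithin
            (by exact_mod_cast WithTop.coe_lt_top _) hU.uniqueDiffOn
        have h2 : DifferentiableOn ℂ (iteratedFDeriv ℂ L.length f) U :=
          h1.congr fun z hz => (iteratedFDerivWithin_of_isOpen L.length hU hz).symm
        exact (h2 u hu).differentiableAt (hU.mem_nhds hu)
      show iteratedFDeriv ℂ (L.length + 1) f u _ = fderiv ℂ (pderivList L f) u (Pi.single j 1)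
      rw [iteratedFDeriv_succ_apply_left]
      rw [List.get_cons_zero]
      show (fderiv ℂ (iteratedFDeriv ℂ L.length f) u (Pi.single j 1))
          (fun s : Fin L.length => (Pi.single (L.get s) 1 : Fin k → ℂ)) = _
      set A := ContinuousMultilinearMap.apply ℂ (fun _ : Fin L.length => (Fin k → ℂ)) E
        (fun s : Fin L.length => Pi.single (L.get s) (1:ℂ)) with hA
      have hcomp : fderiv ℂ (fun z => A (iteratedFDeriv ℂ L.length f z)) u
          = A.comp (fderiv ℂ (iteratedFDeriv ℂ L.length f) u) :=
        (A.hasFDerivAt.comp u hdiff.hasFDerivAt).fderiv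
      have : fderiv ℂ (iteratedFDeriv ℂ L.length f) u (Pi.single j 1)
          (fun s : Fin L.length => Pi.single (L.get s) (1:ℂ))
          = fderiv ℂ (fun z => A (iteratedFDeriv ℂ L.length f z)) u (Pi.single j 1) := by
        rw [hcomp]; rfl
      rw [this]
      have heq : (fun z => A (iteratedFDeriv ℂ L.length f z)) =ᶠ[nhds u] pderivList L f :=
        Filter.eventuallyEq_of_mem (hU.mem_nhds hu) (fun z hz => ih z hz)
      rw [heq.fderiv_eq]

theorem itF_list' (hU : IsOpen U) (hf : ContDiffOn ℂ (⊤ : ℕ∞) f U) {n : ℕ} (L : List (Fin k))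
    (hL : L.length = n) : ∀ u ∈ U,
    iteratedFDeriv ℂ n f u (fun s => Pi.single (L.get (Fin.cast hL.symm s)) 1)
      = pderivList L f u := by
  subst hL
  intro u hu
  have := itF_list hU hf L u hu
  convert this using 3
  rfl

theorem ofFn_get_cast {α : Type*} {n : ℕ} (l : List α) (h : l.length = n) :
    List.ofFn (fun s : Fin n => l.get (Fin.cast h.symm s)) = l := by
  subst h
  have : (fun s : Fin l.length => l.get (Fin.cast rfl s)) = l.get := by
    funext s; rw [Fin.cast_refl]; rfl
  rw [this, List.ofFn_get]

theorem count_ofFn_eq_sum {n : ℕ} (d : Fin n → Fin k) (j : Fin k) :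
    (List.ofFn d).count j = ∑ s, if d s = j then 1 else 0 := by
  induction n with
  | zero => simp
  | succ n ih =>
      rw [List.ofFn_succ, List.count_cons, Fin.sum_univ_succ, ih]
      simp only [beq_iff_eq]
      omega

theorem count_ofFn_card {n : ℕ} (d : Fin n → Fin k) (j : Fin k) :
    (List.ofFn d).count j = (Finset.univ.filter fun s => d s = j).card := by
  rw [count_ofFn_eq_sum, Finset.card_filter]

theorem prod_eval_count {n : ℕ} (d : Fin n → Fin k) (v : Fin k → ℂ) :
    (∏ s, v (d s)) = ∏ j, v j ^ (List.ofFn d).count j := by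
  calc ∏ s, v (d s)
      = ∏ b ∈ Finset.univ.image d, v b ^ (Finset.univ.filter fun a => d a = b).card :=
        Finset.prod_comp v d
    _ = ∏ b ∈ Finset.univ.image d, v b ^ (List.ofFn d).count b :=
        Finset.prod_congr rfl fun j _ => by rw [count_ofFn_card]
    _ = ∏ j, v j ^ (List.ofFn d).count j := by
        refine Finset.prod_subset (Finset.subset_univ _) fun j _ hj => ?_
        have h0 : (List.ofFn d).count j = 0 := by
          rw [count_ofFn_card, Finset.card_eq_zero, Finset.filter_eq_empty_iff]
          intro a _ h
          exact hj (Finset.mem_image.2 ⟨a, Finset.mem_univ a, h⟩)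
        rw [h0, pow_zero]

theorem key_vanish (hU : IsOpen U) (hf : ContDiffOn ℂ (⊤ : ℕ∞) f U) {u₀ : Fin k → ℂ}
    (hu₀ : u₀ ∈ U) (t : ℕ) (ξ : E →ₗ[ℂ] ℂ)
    (hξ : ∀ v : Fin k → ℂ, ξ (iteratedFDeriv ℂ t f u₀ fun _ => v) = 0)
    (J : Fin k → ℕ) (hJ : (∑ j, J j) = t) : ξ (pd J f u₀) = 0 := by
  subst hJ
  set n := ∑ j, J j with hn
  set cnt : (Fin n → Fin k) → (Fin k → ℕ) := fun d j => (List.ofFn d).count j with hcnt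
  -- each basis value of the iterated derivative is a partial derivative
  have hbasis : ∀ d : Fin n → Fin k,
      iteratedFDeriv ℂ n f u₀ (fun s => Pi.single (d s) 1) = pd (cnt d) f u₀ := by
    intro d
    have hlen : (List.ofFn d).length = n := List.length_ofFn
    have h1 := itF_list' hU hf (List.ofFn d) hlen u₀ hu₀
    have h2 : (fun s : Fin n => (Pi.single ((List.ofFn d).get (Fin.cast hlen.symm s)) 1
        : Fin k → ℂ)) = fun s => Pi.single (d s) 1 := by
      funext s
      have hg : (List.ofFn d).get (Fin.cast hlen.symm s) = d s := by
        rw [List.get_ofFn]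
        exact congrArg d (Fin.ext (by simp))
      rw [hg]
    rw [h2] at h1
    rw [h1]
    exact pderivList_perm hU hf (perm_idxList fun j => rfl) u₀ hu₀
  -- expansion of the diagonal values
  have expand : ∀ v : Fin k → ℂ,
      ξ (iteratedFDeriv ℂ n f u₀ fun _ => v)
        = ∑ d : Fin n → Fin k, (∏ s, v (d s)) * ξ (pd (cnt d) f u₀) := by
    intro v
    have hv : (fun _ : Fin n => v) = fun _ : Fin n => ∑ j, Pi.single j (v j) := by
      funext s; rw [Finset.univ_sum_single]
    rw [hv, ContinuousMultilinearMap.map_sum]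
    rw [map_sum]
    refine Finset.sum_congr rfl fun d _ => ?_
    have : (fun s => Pi.single (d s) (v (d s)) : Fin n → Fin k → ℂ)
        = fun s => v (d s) • (Pi.single (d s) 1 : Fin k → ℂ) := by
      funext s
      rw [← Pi.single_smul, smul_eq_mul, mul_one]
    rw [this, ContinuousMultilinearMap.map_smul_univ, map_smul, smul_eq_mul, hbasis d]
  -- the polynomial with these coefficients vanishes identically
  set P : MvPolynomial (Fin k) ℂ := ∑ d : Fin n → Fin k,
    MvPolynomial.monomial (Finsupp.equivFunOnFinite.symm (cnt d)) (ξ (pd (cnt d) f u₀)) with hP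
  have heval : ∀ v : Fin k → ℂ, MvPolynomial.eval v P = 0 := by
    intro v
    rw [hP, map_sum]
    have : ∀ d : Fin n → Fin k,
        MvPolynomial.eval v (MvPolynomial.monomial (Finsupp.equivFunOnFinite.symm (cnt d))
          (ξ (pd (cnt d) f u₀)))
        = (∏ s, v (d s)) * ξ (pd (cnt d) f u₀) := by
      intro d
      rw [MvPolynomial.eval_monomial]
      rw [Finsupp.prod_fintype _ _ fun _ => pow_zero _]
      rw [mul_comm, prod_eval_count]
      congr 1
    rw [Finset.sum_congr rfl fun d _ => this d, ← expand v, hξ v]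
  have hP0 : P = 0 := by
    refine MvPolynomial.funext fun v => ?_
    rw [heval v, map_zero]
  -- extract the coefficient of the monomial J
  have hcoeff := congrArg (MvPolynomial.coeff (Finsupp.equivFunOnFinite.symm J)) hP0
  rw [hP, MvPolynomial.coeff_zero] at hcoeff
  rw [show MvPolynomial.coeff (Finsupp.equivFunOnFinite.symm J)
        (∑ d : Fin n → Fin k, MvPolynomial.monomial (Finsupp.equivFunOnFinite.symm (cnt d))
          (ξ (pd (cnt d) f u₀)))
      = ∑ d : Fin n → Fin k, if cnt d = J then ξ (pd J f u₀) else 0 from ?_] at hcoeff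
  · -- conclude from the fact that some `d` has count `J`
    obtain ⟨d₀, hd₀⟩ : ∃ d : Fin n → Fin k, cnt d = J := by
      have hlen : (idxList J).length = n := length_idxList J
      refine ⟨fun s => (idxList J).get (Fin.cast hlen.symm s), ?_⟩
      funext j
      show (List.ofFn _).count j = J j
      rw [ofFn_get_cast (idxList J) hlen, count_idxList]
    rw [← Finset.sum_filter, Finset.sum_const] at hcoeff
    have hpos : 0 < (Finset.univ.filter fun d : Fin n → Fin k => cnt d = J).card :=
      Finset.card_pos.2 ⟨d₀, Finset.mem_filter.2 ⟨Finset.mem_univ _, hd₀⟩⟩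
    have := hcoeff
    rw [nsmul_eq_mul, mul_eq_zero] at this
    rcases this with h | h
    · exact absurd h (by exact_mod_cast hpos.ne')
    · exact h
  · rw [MvPolynomial.coeff_sum]
    refine Finset.sum_congr rfl fun d _ => ?_
    rw [MvPolynomial.coeff_monomial]
    by_cases h : cnt d = J
    · rw [if_pos (by rw [h]), if_pos h, h]
    · rw [if_neg (fun hc => h (Finsupp.equivFunOnFinite.symm.injective hc)), if_neg h]

theorem coneLift_contDiffOn {N : ℕ} {x : (Fin k → ℂ) → (Fin N → ℂ)}
    (hx : ContDiffOn ℂ (⊤ : ℕ∞) x U) : ContDiffOn ℂ (⊤ : ℕ∞) (coneLift x) U := by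
  rw [contDiffOn_pi]
  intro i
  refine Fin.cases ?_ ?_ i
  · exact contDiffOn_const
  · intro i'
    exact (contDiffOn_pi.1 hx) i'

theorem sum_add_single {I : Fin k → ℕ} {j : Fin k} :
    (∑ a, (I + Pi.single j 1 : Fin k → ℕ) a) = (∑ a, I a) + 1 := by
  have : ∀ a, (I + Pi.single j 1 : Fin k → ℕ) a = I a + (if a = j then 1 else 0) := by
    intro a; simp [Pi.single_apply]
  rw [Finset.sum_congr rfl fun a _ => this a, Finset.sum_add_distrib]
  simp

theorem pderivList_cons_eq_pd (hU : IsOpen U) (hf : ContDiffOn ℂ (⊤ : ℕ∞) f U)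
    {u : Fin k → ℂ} (hu : u ∈ U) (I : Fin k → ℕ) (j : Fin k) :
    pderivList (j :: idxList I) f u = pd (I + Pi.single j 1) f u := by
  refine pderivList_perm hU hf (perm_idxList fun a => ?_) u hu
  rw [List.count_cons, count_idxList]
  simp only [beq_iff_eq, Pi.add_apply, Pi.single_apply]
  by_cases h : a = j
  · subst h; simp
  · rw [if_neg h, if_neg (fun hh => h hh.symm)]

theorem fderiv_pd_apply (hU : IsOpen U) (hf : ContDiffOn ℂ (⊤ : ℕ∞) f U)
    {u : Fin k → ℂ} (hu : u ∈ U) (I : Fin k → ℕ) (w : Fin k → ℂ) :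
    fderiv ℂ (pd I f) u w = ∑ j, w j • pd (I + Pi.single j 1) f u := by
  have hw : ∑ j, w j • (Pi.single j 1 : Fin k → ℂ) = w := by
    refine Eq.trans (Finset.sum_congr rfl fun j _ => ?_) (Finset.univ_sum_single w)
    rw [← Pi.single_smul, smul_eq_mul, mul_one]
  conv_lhs => rw [← hw]
  rw [map_sum]
  refine Finset.sum_congr rfl fun j _ => ?_
  rw [map_smul]
  congr 1
  exact pderivList_cons_eq_pd hU hf hu I j


end Helpers

/-- If `dim_ℂ |I^t| = k - ℓ` with `0 < ℓ ≤ k`, then for every `λ` the derivative of the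
parametrisation `Φ_{t-1}(u, λ) = ∑_{|I| ≤ t-1} λ_I x̂^I(u)` of the cone over `Tan^{t-1}(V)` at
`(u₀, λ)` has image inside `T^(t)(u₀)` and rank at most `d_{t-1} + (k - ℓ) + 1`; in particular
`V` has `(t-1)`-th osculating defect at least `ℓ`. -/
theorem osculating_defect_of_small_fundamental_form (k N t ℓ : ℕ) (hk : 1 ≤ k) (hN : 1 ≤ N)
    (ht : 2 ≤ t) (hl : 0 < ℓ) (hlk : ℓ ≤ k)
    (U : Set (Fin k → ℂ)) (hU : IsOpen U) (u₀ : Fin k → ℂ) (hu₀ : u₀ ∈ U)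
    (x : (Fin k → ℂ) → (Fin N → ℂ)) (hx : ContDiffOn ℂ (⊤ : ℕ∞) x U)
    (hff : Module.finrank ℂ ↥(fundForm (coneLift x) u₀ t) = k - ℓ) :
    ∀ lam : {I : Fin k → ℕ // I ∈ degLE k (t - 1)} → ℂ,
      (∀ q : (Fin k → ℂ) × ({I : Fin k → ℕ // I ∈ degLE k (t - 1)} → ℂ),
          fderiv ℂ (tanPhi (coneLift x) (t - 1)) (u₀, lam) q ∈ osc (coneLift x) t u₀) ∧
        Module.finrank ℂ
            ↥(LinearMap.range (fderiv ℂ (tanPhi (coneLift x) (t - 1)) (u₀, lam) :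
              ((Fin k → ℂ) × ({I : Fin k → ℕ // I ∈ degLE k (t - 1)} → ℂ)) →ₗ[ℂ] (Fin (N + 1) → ℂ))) ≤
          Module.finrank ℂ ↥(osc (coneLift x) (t - 1) u₀) + (k - ℓ) ∧
        Module.finrank ℂ
            ↥(LinearMap.range (fderiv ℂ (tanPhi (coneLift x) (t - 1)) (u₀, lam) :
              ((Fin k → ℂ) × ({I : Fin k → ℕ // I ∈ degLE k (t - 1)} → ℂ)) →ₗ[ℂ] (Fin (N + 1) → ℂ))) + ℓ ≤
          k + Module.finrank ℂ ↥(osc (coneLift x) (t - 1) u₀) := by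
  have _hk := hk; have _hN := hN; have _hl := hl

  intro lam
  set xh := coneLift x with hxhdef
  have hxh : ContDiffOn ℂ (⊤ : ℕ∞) xh U := coneLift_contDiffOn hx
  have hdiffpd : ∀ I : Fin k → ℕ, DifferentiableAt ℂ (pd I xh) u₀ :=
    fun I => pderivList_differentiableAt hU hxh _ hu₀
  set D : ((Fin k → ℂ) × ({I : Fin k → ℕ // I ∈ degLE k (t - 1)} → ℂ)) →L[ℂ]
      (Fin (N + 1) → ℂ) :=
    ∑ I : {I : Fin k → ℕ // I ∈ degLE k (t - 1)},
      (lam I • ((fderiv ℂ (pd I.1 xh) u₀).comp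
          (ContinuousLinearMap.fst ℂ (Fin k → ℂ) ({I : Fin k → ℕ // I ∈ degLE k (t - 1)} → ℂ)))
        + (((ContinuousLinearMap.proj I).comp
            (ContinuousLinearMap.snd ℂ (Fin k → ℂ)
              ({I : Fin k → ℕ // I ∈ degLE k (t - 1)} → ℂ))).smulRight (pd I.1 xh u₀)))
    with hDdef
  have hcomp : ∀ I : {I : Fin k → ℕ // I ∈ degLE k (t - 1)},
      HasFDerivAt (fun p : (Fin k → ℂ) × ({I : Fin k → ℕ // I ∈ degLE k (t - 1)} → ℂ) =>
          p.2 I • pd I.1 xh p.1)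
        (lam I • ((fderiv ℂ (pd I.1 xh) u₀).comp
            (ContinuousLinearMap.fst ℂ (Fin k → ℂ) ({I : Fin k → ℕ // I ∈ degLE k (t - 1)} → ℂ)))
          + (((ContinuousLinearMap.proj I).comp
              (ContinuousLinearMap.snd ℂ (Fin k → ℂ)
                ({I : Fin k → ℕ // I ∈ degLE k (t - 1)} → ℂ))).smulRight (pd I.1 xh u₀)))
        (u₀, lam) := by
    intro I
    have hc : HasFDerivAt
        (fun p : (Fin k → ℂ) × ({I : Fin k → ℕ // I ∈ degLE k (t - 1)} → ℂ) => p.2 I)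
        ((ContinuousLinearMap.proj I).comp
          (ContinuousLinearMap.snd ℂ (Fin k → ℂ) ({I : Fin k → ℕ // I ∈ degLE k (t - 1)} → ℂ)))
        (u₀, lam) :=
      ((ContinuousLinearMap.proj I).comp
        (ContinuousLinearMap.snd ℂ (Fin k → ℂ)
          ({I : Fin k → ℕ // I ∈ degLE k (t - 1)} → ℂ))).hasFDerivAt
    have hg : HasFDerivAt
        (fun p : (Fin k → ℂ) × ({I : Fin k → ℕ // I ∈ degLE k (t - 1)} → ℂ) => pd I.1 xh p.1)
        ((fderiv ℂ (pd I.1 xh) u₀).comp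
          (ContinuousLinearMap.fst ℂ (Fin k → ℂ) ({I : Fin k → ℕ // I ∈ degLE k (t - 1)} → ℂ)))
        (u₀, lam) :=
      (hdiffpd I.1).hasFDerivAt.comp (u₀, lam)
        (ContinuousLinearMap.fst ℂ (Fin k → ℂ)
          ({I : Fin k → ℕ // I ∈ degLE k (t - 1)} → ℂ)).hasFDerivAt
    exact hc.smul hg
  have hPhi : HasFDerivAt (tanPhi xh (t - 1)) D (u₀, lam) := by
    have hs := HasFDerivAt.fun_sum (fun I (_ : I ∈ Finset.univ) => hcomp I)
    rw [hDdef]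
    exact hs
  have hD : fderiv ℂ (tanPhi xh (t - 1)) (u₀, lam) = D := hPhi.fderiv
  have hdegLE : ∀ I : {I : Fin k → ℕ // I ∈ degLE k (t - 1)}, (∑ j, I.1 j) ≤ t - 1 :=
    fun I => (Finset.mem_filter.1 I.2).2
  have hmem_osc : ∀ q, D q ∈ osc xh t u₀ := by
    intro q
    have hDq : D q = ∑ I : {I : Fin k → ℕ // I ∈ degLE k (t - 1)},
        (lam I • (∑ j, q.1 j • pd (I.1 + Pi.single j 1) xh u₀) + q.2 I • pd I.1 xh u₀) := by
      rw [hDdef, ContinuousLinearMap.sum_apply]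
      refine Finset.sum_congr rfl fun I _ => ?_
      rw [ContinuousLinearMap.add_apply, ContinuousLinearMap.smul_apply,
        ContinuousLinearMap.smulRight_apply, ContinuousLinearMap.comp_apply,
        ContinuousLinearMap.comp_apply]
      rw [ContinuousLinearMap.coe_fst', ContinuousLinearMap.coe_snd']
      rw [fderiv_pd_apply hU hxh hu₀]
      rfl
    rw [hDq]
    refine Submodule.sum_mem _ fun I _ => Submodule.add_mem _ ?_ ?_
    · refine Submodule.smul_mem _ _ (Submodule.sum_mem _ fun j _ => Submodule.smul_mem _ _ ?_)
      refine Submodule.subset_span ⟨I.1 + Pi.single j 1, ?_, rfl⟩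
      have := hdegLE I
      rw [sum_add_single]
      omega
    · exact Submodule.smul_mem _ _
        (Submodule.subset_span ⟨I.1, le_trans (hdegLE I) (by omega), rfl⟩)
  -- duality set-up
  set A := osc xh (t - 1) u₀ with hAdef
  set bigL : Module.Dual ℂ (Fin (N + 1) → ℂ) →ₗ[ℂ] ((Fin k → ℂ) → ℂ) :=
    { toFun := fun ξ => formOf xh u₀ t ξ
      map_add' := fun a b => by funext v; simp [formOf]
      map_smul' := fun c a => by funext v; simp [formOf] } with hbigLdef
  set ann := A.dualAnnihilator with hanndef
  set L' := bigL.comp ann.subtype with hL'def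
  have hfundset : fundSet xh u₀ t = ↑(LinearMap.range L') := by
    ext F
    constructor
    · rintro ⟨ξ, hξ1, rfl⟩
      exact ⟨⟨ξ, (Submodule.mem_dualAnnihilator ξ).2 hξ1⟩, rfl⟩
    · rintro ⟨⟨ξ, hξ⟩, rfl⟩
      exact ⟨ξ, (Submodule.mem_dualAnnihilator ξ).1 hξ, rfl⟩
  have hfund : fundForm xh u₀ t = LinearMap.range L' := by
    rw [fundForm, hfundset, Submodule.span_eq]
  have hrankL : Module.finrank ℂ ↥(LinearMap.range L') = k - ℓ := by
    rw [← hfund]; exact hff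
  set Kn := LinearMap.ker L' with hKndef
  set K' := Kn.map ann.subtype with hK'def
  set A' := K'.dualCoannihilator with hA'def
  have hKmem : ∀ ξ : Module.Dual ℂ (Fin (N + 1) → ℂ), ξ ∈ K' →
      (∀ y ∈ A, ξ y = 0) ∧ formOf xh u₀ t ξ = 0 := by
    rintro ξ ⟨ξ₀, hker, rfl⟩
    refine ⟨fun y hy => (Submodule.mem_dualAnnihilator ξ₀.1).1 ξ₀.2 y hy, ?_⟩
    exact LinearMap.mem_ker.1 hker
  have hosc_le : osc xh t u₀ ≤ A' := by
    refine Submodule.span_le.2 ?_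
    rintro y ⟨J, hJt, rfl⟩
    rw [SetLike.mem_coe, Submodule.mem_dualCoannihilator]
    intro ξ hξ
    obtain ⟨hann, hform⟩ := hKmem ξ hξ
    by_cases hle : (∑ j, J j) ≤ t - 1
    · exact hann _ (Submodule.subset_span ⟨J, hle, rfl⟩)
    · have hJt' : (∑ j, J j) = t := by omega
      exact key_vanish hU hxh hu₀ t ξ (fun v => congrFun hform v) J hJt'
  have hrange_le : LinearMap.range (D : ((Fin k → ℂ) × ({I : Fin k → ℕ // I ∈ degLE k (t - 1)} → ℂ)) →ₗ[ℂ] (Fin (N + 1) → ℂ)) ≤ A' := by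
    rintro z ⟨q, rfl⟩
    exact hosc_le (hmem_osc q)
  -- dimension count
  have e1 : Module.finrank ℂ ↥ann + Module.finrank ℂ ↥A = Module.finrank ℂ (Fin (N + 1) → ℂ) := by
    rw [← LinearEquiv.finrank_eq (Subspace.quotEquivAnnihilator A)]
    exact Submodule.finrank_quotient_add_finrank A
  have e2 : Module.finrank ℂ ↥(LinearMap.range L') + Module.finrank ℂ ↥Kn = Module.finrank ℂ ↥ann :=
    LinearMap.finrank_range_add_finrank_ker L'
  have e3 : Module.finrank ℂ ↥K' = Module.finrank ℂ ↥Kn := Submodule.finrank_map_subtype_eq ann Kn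
  have e4 : Module.finrank ℂ ↥K' + Module.finrank ℂ ↥A' = Module.finrank ℂ (Fin (N + 1) → ℂ) :=
    Subspace.finrank_add_finrank_dualCoannihilator_eq K'
  have eA : Module.finrank ℂ ↥A ≤ Module.finrank ℂ (Fin (N + 1) → ℂ) := Submodule.finrank_le A
  have e5 : Module.finrank ℂ ↥A' = Module.finrank ℂ ↥A + (k - ℓ) := by omega
  have hrankD : Module.finrank ℂ ↥(LinearMap.range (D : ((Fin k → ℂ) × ({I : Fin k → ℕ // I ∈ degLE k (t - 1)} → ℂ)) →ₗ[ℂ] (Fin (N + 1) → ℂ))) ≤ Module.finrank ℂ ↥A + (k - ℓ) := by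
    rw [← e5]
    exact Submodule.finrank_mono hrange_le
  refine ⟨fun q => by rw [hD]; exact hmem_osc q, ?_, ?_⟩
  · rw [hD]; exact hrankD
  · rw [hD]; omega

end
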